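/- Let X ∈ R^{N1×N2} be s-sparse and let U1 ∈ R^{m1×N1}, U2 ∈ R^{m2×N2} each satisfy NSP_s. If X = Σ_{i=1}^r z_i u_i^T is a rank decomposition of X (r = rank X), then Y = U1 X U2^T = Σ_{i=1}^r (U1 z_i)(U2 u_i)^T is a rank decomposition of Y, i.e. rank(Y) = rank(X). -/

import Mathlib

/-- A matrix is `s`-sparse if it has at most `s` nonzero entries in total. -/
def SparseMat {n1 n2 : ℕ} (s : ℕ) (X : Matrix (Fin n1) (Fin n2) ℝ) : Prop :=
  (Finset.univ.filter fun p : Fin n1 × Fin n2 => X p.1 p.2 ≠ 0).card ≤ s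

/-- The null space property of order `s`. -/
def NSP {m n : ℕ} (s : ℕ) (A : Matrix (Fin m) (Fin n) ℝ) : Prop :=
  ∀ w : Fin n → ℝ, A.mulVec w = 0 → w ≠ 0 →
    ∀ S : Finset (Fin n), S.card = s →
      ∑ i ∈ S, |w i| < ∑ i ∈ Sᶜ, |w i|

open Matrix in
/-- A sum of rank-one matrices applied to a vector. -/
theorem sum_vecMulVec_mulVec {m n r : ℕ} (a : Fin r → Fin m → ℝ) (b : Fin r → Fin n → ℝ)
    (v : Fin n → ℝ) :
    (∑ i, Matrix.vecMulVec (a i) (b i)).mulVec v = ∑ i, (b i ⬝ᵥ v) • a i := by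
  ext k
  simp [Matrix.mulVec, dotProduct, Matrix.vecMulVec_apply, Finset.sum_mul,
    Finset.mul_sum, Finset.sum_apply, Matrix.sum_apply, Pi.smul_apply, mul_comm]
  rw [Finset.sum_comm]
  apply Finset.sum_congr rfl; intro x _
  apply Finset.sum_congr rfl; intro y _
  ring

/-- Conjugating a rank-one matrix. -/
theorem mul_vecMulVec_mul {N1 N2 m1 m2 : ℕ} (U1 : Matrix (Fin m1) (Fin N1) ℝ)
    (U2 : Matrix (Fin m2) (Fin N2) ℝ) (a : Fin N1 → ℝ) (b : Fin N2 → ℝ) :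
    U1 * Matrix.vecMulVec a b * U2.transpose =
      Matrix.vecMulVec (U1.mulVec a) (U2.mulVec b) := by
  ext i j
  simp [Matrix.mul_apply, Matrix.vecMulVec_apply, Matrix.mulVec, dotProduct,
    Finset.sum_mul, Finset.mul_sum]
  rw [Finset.sum_comm]
  conv_rhs => rw [Finset.sum_comm]
  apply Finset.sum_congr rfl; intro x _
  apply Finset.sum_congr rfl; intro y _
  ring

/-- A matrix with NSP of order `s` kills no nonzero vector of the column space of an
`s`-sparse matrix. -/
theorem nsp_ker {N M m s : ℕ} (hs : s ≤ N) (X : Matrix (Fin N) (Fin M) ℝ)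
    (hX : SparseMat s X) (U : Matrix (Fin m) (Fin N) ℝ) (hU : NSP s U)
    {w : Fin N → ℝ} (hw : w ∈ LinearMap.range X.mulVecLin) (h0 : U.mulVec w = 0) :
    w = 0 := by
  by_contra hne
  obtain ⟨v, rfl⟩ := hw
  simp only [Matrix.mulVecLin_apply] at *
  set R : Finset (Fin N) :=
    (Finset.univ.filter fun p : Fin N × Fin M => X p.1 p.2 ≠ 0).image Prod.fst with hR
  have hRcard : R.card ≤ s := le_trans Finset.card_image_le hX
  obtain ⟨S, hRS, hScard⟩ := Finset.exists_superset_card_eq hRcard (by simpa using hs)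
  have hsupp : ∀ i ∉ S, X.mulVec v i = 0 := by
    intro i hi
    have hz : ∀ j, X i j = 0 := by
      intro j; by_contra hj
      exact hi (hRS (Finset.mem_image.mpr ⟨(i, j),
        Finset.mem_filter.mpr ⟨Finset.mem_univ _, hj⟩, rfl⟩))
    simp [Matrix.mulVec, dotProduct, hz]
  have hlt := hU _ h0 hne S hScard
  have h2 : ∑ i ∈ Sᶜ, |X.mulVec v i| = 0 :=
    Finset.sum_eq_zero fun i hi => by rw [hsupp i (Finset.mem_compl.mp hi), abs_zero]
  have h3 : 0 ≤ ∑ i ∈ S, |X.mulVec v i| := Finset.sum_nonneg fun _ _ => abs_nonneg _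
  linarith

open Matrix in
/-- If a rank decomposition of `X` is given, the `z i` span the column space, and the
image family under an NSP matrix stays linearly independent. -/
theorem nsp_linearIndependent {N M m s r : ℕ} (hs : s ≤ N)
    (X : Matrix (Fin N) (Fin M) ℝ) (hX : SparseMat s X)
    (U : Matrix (Fin m) (Fin N) ℝ) (hU : NSP s U)
    (hr : r = X.rank)
    (z : Fin r → Fin N → ℝ) (u : Fin r → Fin M → ℝ)
    (hz : LinearIndependent ℝ z)
    (hdec : X = ∑ i, Matrix.vecMulVec (z i) (u i)) :
    LinearIndependent ℝ (fun i => U.mulVec (z i)) := by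
  have hXrange : LinearMap.range X.mulVecLin ≤ Submodule.span ℝ (Set.range z) := by
    rintro w ⟨v, rfl⟩
    rw [Matrix.mulVecLin_apply, hdec, sum_vecMulVec_mulVec]
    exact Submodule.sum_mem _ fun i _ =>
      Submodule.smul_mem _ _ (Submodule.subset_span ⟨i, rfl⟩)
  have hfr1 : Module.finrank ℝ (Submodule.span ℝ (Set.range z)) = r := by
    rw [finrank_span_eq_card hz, Fintype.card_fin]
  have hfr2 : Module.finrank ℝ (LinearMap.range X.mulVecLin) = r := by
    rw [hr]; rfl
  have hspan : Submodule.span ℝ (Set.range z) = LinearMap.range X.mulVecLin :=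
    (Submodule.eq_of_le_of_finrank_le hXrange (by rw [hfr1, hfr2])).symm
  have hdisj : Disjoint (Submodule.span ℝ (Set.range z)) (LinearMap.ker U.mulVecLin) := by
    rw [Submodule.disjoint_def]
    intro x hx hker
    exact nsp_ker hs X hX U hU (hspan ▸ hx) (by simpa using hker)
  have ha := hz.map (f := U.mulVecLin) hdisj
  have hco : (U.mulVecLin ∘ z) = fun i => U.mulVec (z i) :=
    funext fun i => Matrix.mulVecLin_apply _ _
  rwa [hco] at ha

/-- If `X` is `s`-sparse, `U1, U2` satisfy NSP of order `s`, and
`X = ∑ i, z i (u i)ᵀ` is a rank decomposition of `X` (`r = rank X`), then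
`Y = U1 X U2ᵀ = ∑ i, (U1 z i)(U2 u i)ᵀ` is a rank decomposition of `Y`;
in particular `rank Y = rank X`. -/
theorem rank_decomposition_preserved {N1 N2 m1 m2 s r : ℕ}
    (hs1 : s ≤ N1) (hs2 : s ≤ N2)
    (X : Matrix (Fin N1) (Fin N2) ℝ) (hX : SparseMat s X)
    (U1 : Matrix (Fin m1) (Fin N1) ℝ) (U2 : Matrix (Fin m2) (Fin N2) ℝ)
    (hU1 : NSP s U1) (hU2 : NSP s U2)
    (hr : r = X.rank)
    (z : Fin r → Fin N1 → ℝ) (u : Fin r → Fin N2 → ℝ)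
    (hz : LinearIndependent ℝ z) (hu : LinearIndependent ℝ u)
    (hdec : X = ∑ i, Matrix.vecMulVec (z i) (u i)) :
    U1 * X * U2.transpose =
      ∑ i, Matrix.vecMulVec (U1.mulVec (z i)) (U2.mulVec (u i)) ∧
    LinearIndependent ℝ (fun i => U1.mulVec (z i)) ∧
    LinearIndependent ℝ (fun i => U2.mulVec (u i)) ∧
    (U1 * X * U2.transpose).rank = X.rank := by
  classical
  -- the decomposition of the product
  have heq : U1 * X * U2.transpose =
      ∑ i, Matrix.vecMulVec (U1.mulVec (z i)) (U2.mulVec (u i)) := by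
    rw [hdec, Matrix.mul_sum, Matrix.sum_mul]
    exact Finset.sum_congr rfl fun i _ => mul_vecMulVec_mul U1 U2 (z i) (u i)
  -- sparsity and decomposition for the transpose
  have hXT : SparseMat s X.transpose := by
    refine le_trans (le_of_eq (Finset.card_nbij' Prod.swap Prod.swap ?_ ?_ ?_ ?_)) hX
    · intro p hp; simp only [Finset.mem_coe, Finset.mem_filter, Finset.mem_univ, true_and] at *
      exact hp
    · intro p hp; simp only [Finset.mem_coe, Finset.mem_filter, Finset.mem_univ, true_and] at *
      exact hp
    · intro p _; rfl
    · intro p _; rfl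
  have hdecT : X.transpose = ∑ i, Matrix.vecMulVec (u i) (z i) := by
    rw [hdec, Matrix.transpose_sum]
    refine Finset.sum_congr rfl fun i _ => ?_
    ext j k
    simp [Matrix.vecMulVec_apply, mul_comm]
  have hrT : r = X.transpose.rank := by rw [Matrix.rank_transpose]; exact hr
  -- linear independence of the image families
  have ha : LinearIndependent ℝ (fun i => U1.mulVec (z i)) :=
    nsp_linearIndependent hs1 X hX U1 hU1 hr z u hz hdec
  have hb : LinearIndependent ℝ (fun i => U2.mulVec (u i)) :=
    nsp_linearIndependent hs2 X.transpose hXT U2 hU2 hrT u z hu hdecT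
  refine ⟨heq, ha, hb, ?_⟩
  -- rank computation
  set a : Fin r → Fin m1 → ℝ := fun i => U1.mulVec (z i) with haa
  set b : Fin r → Fin m2 → ℝ := fun i => U2.mulVec (u i) with hbb
  have hrange : LinearMap.range (U1 * X * U2.transpose).mulVecLin =
      Submodule.span ℝ (Set.range a) := by
    apply le_antisymm
    · rintro w ⟨v, rfl⟩
      rw [Matrix.mulVecLin_apply, heq, sum_vecMulVec_mulVec]
      exact Submodule.sum_mem _ fun i _ =>
        Submodule.smul_mem _ _ (Submodule.subset_span ⟨i, rfl⟩)
    · rw [Submodule.span_le]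
      rintro _ ⟨j, rfl⟩
      set B : Matrix (Fin r) (Fin m2) ℝ := Matrix.of b with hB
      have hBrank : B.rank = r := by
        have h1 : B.transpose.rank = r := by
          rw [Matrix.rank_eq_finrank_span_cols, Matrix.col_transpose]
          exact (finrank_span_eq_card hb).trans (Fintype.card_fin r)
        exact (Matrix.rank_transpose B).symm.trans h1
      have hsurj : Function.Surjective B.mulVecLin := by
        rw [← LinearMap.range_eq_top]
        apply Submodule.eq_top_of_finrank_eq
        have h1 : Module.finrank ℝ (LinearMap.range B.mulVecLin) = B.rank := rfl
        rw [h1, hBrank]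
        simp [Module.finrank_pi]
      obtain ⟨v, hv⟩ := hsurj (Pi.single j 1)
      show a j ∈ LinearMap.range (U1 * X * U2.transpose).mulVecLin
      refine ⟨v, ?_⟩
      rw [Matrix.mulVecLin_apply, heq, sum_vecMulVec_mulVec]
      have hbv : ∀ i, dotProduct (b i) v = (Pi.single j 1 : Fin r → ℝ) i := by
        intro i
        have := congrFun hv i
        simpa [Matrix.mulVecLin_apply, Matrix.mulVec, hB] using this
      rw [Finset.sum_congr rfl fun i _ => by rw [hbv i]]
      simp [Pi.single_apply, ite_smul, Finset.sum_ite_eq', haa]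
  have : (U1 * X * U2.transpose).rank =
      Module.finrank ℝ (LinearMap.range (U1 * X * U2.transpose).mulVecLin) := rfl
  rw [this, hrange, finrank_span_eq_card ha, Fintype.card_fin, hr]
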